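/- Let S(a) = H_a(w_+(a)) + H_a(w_-(a)) for a > 0, where H_a and w_±(a) carry their dependence on a explicitly. Then S(a) → 0 as a → 0+, S is differentiable on (0,∞) with S'(a) = -a, and consequently S(a) < 0 for every a > 0; equivalently, H_a(w_+(a)) < -H_a(w_-(a)) for all a > 0. -/

import Mathlib

open Real Filter

/-- `H a w = (w² - 1)/2 + (2+a)(w+1) + log(-w)` -/
noncomputable def H (a w : ℝ) : ℝ := (w ^ 2 - 1) / 2 + (2 + a) * (w + 1) + Real.log (-w)

/-- `w₊ = -1 - a/2 + √(a + a²/4)` -/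
noncomputable def wp (a : ℝ) : ℝ := -1 - a / 2 + Real.sqrt (a + a ^ 2 / 4)

/-- `w₋ = -1 - a/2 - √(a + a²/4)` -/
noncomputable def wm (a : ℝ) : ℝ := -1 - a / 2 - Real.sqrt (a + a ^ 2 / 4)

/-- `S a = H_a(w₊(a)) + H_a(w₋(a))`. -/
noncomputable def S (a : ℝ) : ℝ := H a (wp a) + H a (wm a)

lemma S_eq {a : ℝ} (ha : 0 < a) : S a = -a ^ 2 / 2 := by
  have hs : Real.sqrt (a + a ^ 2 / 4) ^ 2 = a + a ^ 2 / 4 :=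
    Real.sq_sqrt (by positivity)
  have hs0 : 0 ≤ Real.sqrt (a + a ^ 2 / 4) := Real.sqrt_nonneg _
  have hwp_neg : wp a < 0 := by
    have h1 : Real.sqrt (a + a ^ 2 / 4) < 1 + a / 2 := by
      nlinarith [hs, hs0]
    unfold wp; linarith
  have hwm_neg : wm a < 0 := by unfold wm; linarith
  have hlog : Real.log (-wp a) + Real.log (-wm a) = 0 := by
    rw [← Real.log_mul (by linarith) (by linarith),
      show (-wp a) * (-wm a) = 1 by unfold wp wm; nlinarith [hs]]
    exact Real.log_one
  unfold S H wp wm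
  unfold wp wm at hlog
  nlinarith [hs, hlog]

theorem stmt_5 :
    Tendsto S (nhdsWithin 0 (Set.Ioi 0)) (nhds 0) ∧
    (∀ a : ℝ, 0 < a → HasDerivAt S (-a) a) ∧
    (∀ a : ℝ, 0 < a → S a < 0) ∧
    (∀ a : ℝ, 0 < a → H a (wp a) < -H a (wm a)) := by
  have hneg : ∀ a : ℝ, 0 < a → S a < 0 := by
    intro a ha; rw [S_eq ha]; nlinarith
  refine ⟨?_, ?_, hneg, ?_⟩
  · have h1 : Tendsto (fun a : ℝ => -a ^ 2 / 2) (nhdsWithin 0 (Set.Ioi 0)) (nhds 0) := by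
      have : Tendsto (fun a : ℝ => -a ^ 2 / 2) (nhds 0) (nhds (-(0:ℝ) ^ 2 / 2)) := by
        exact (continuous_pow 2).neg.div_const 2 |>.tendsto 0
      simpa using this.mono_left nhdsWithin_le_nhds
    refine h1.congr' ?_
    filter_upwards [self_mem_nhdsWithin] with a ha
    exact (S_eq ha).symm
  · intro a ha
    have h1 : HasDerivAt (fun x : ℝ => -x ^ 2 / 2) (-a) a := by
      have := (hasDerivAt_pow 2 a).neg.div_const 2
      exact this.congr_deriv (by norm_num; ring)
    refine h1.congr_of_eventuallyEq ?_
    filter_upwards [Ioi_mem_nhds ha] with x hx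
    exact S_eq hx
  · intro a ha
    have := hneg a ha
    unfold S at this
    linarith
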